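/- For a simplicial group G and the recursively defined section S_G of D_G, one has for each i ∈ [0,n−1] the identity y_i d_n d_{n−1} ⋯ d_{i+1} = g_i, where (y_j)_j = (g_j)_j (S_G)_n. (This is the key inductive computation showing S_G D_G = id.) -/
import Mathlib

namespace Paper

/-- clamped coface map `δ^k : [a] → [b]`. -/
def δOH (k a b : ℕ) : Fin (a+1) →o Fin (b+1) where
  toFun i := ⟨min (if (i:ℕ) < k then (i:ℕ) else (i:ℕ)+1) b, Nat.lt_succ_of_le (Nat.min_le_right _ _)⟩
  monotone' := by
    intro i j hij
    have h : (i:ℕ) ≤ (j:ℕ) := hij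
    simp only [Fin.mk_le_mk]
    split_ifs <;> omega

/-- clamped codegeneracy map `σ^k : [a] → [b]`. -/
def σOH (k a b : ℕ) : Fin (a+1) →o Fin (b+1) where
  toFun i := ⟨min (if (i:ℕ) ≤ k then (i:ℕ) else (i:ℕ)-1) b, Nat.lt_succ_of_le (Nat.min_le_right _ _)⟩
  monotone' := by
    intro i j hij
    have h : (i:ℕ) ≤ (j:ℕ) := hij
    simp only [Fin.mk_le_mk]
    split_ifs <;> omega

/-- `τ^k : [n] → [1]`, sending `[0, n-k]` to `0` and the rest to `1`. -/
def τOH (n k : ℕ) : Fin (n+1) →o Fin 2 where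
  toFun i := if (i:ℕ) + k ≤ n then 0 else 1
  monotone' := by
    intro i j hij
    have h : (i:ℕ) ≤ (j:ℕ) := hij
    dsimp only
    split_ifs with h1 h2 h3
    · exact le_refl _
    · exact Fin.zero_le _
    · exact absurd h3 (by omega)
    · exact le_refl _

/-- application of `θ : [m] → [n]` to a natural number (clamped). -/
def fApp {m n : ℕ} (θ : Fin (m+1) →o Fin (n+1)) (x : ℕ) : ℕ :=
  (θ ⟨min x m, Nat.lt_succ_of_le (Nat.min_le_right _ _)⟩ : Fin (n+1))

theorem fApp_mono {m n : ℕ} (θ : Fin (m+1) →o Fin (n+1)) {x y : ℕ} (h : x ≤ y) :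
    fApp θ x ≤ fApp θ y :=
  Fin.le_def.mp (θ.monotone (Fin.mk_le_mk.mpr (by omega)))

theorem fApp_le {m n : ℕ} (θ : Fin (m+1) →o Fin (n+1)) (x : ℕ) : fApp θ x ≤ n :=
  Nat.lt_succ_iff.mp (Fin.isLt _)

theorem fApp_coe {m n : ℕ} (θ : Fin (m+1) →o Fin (n+1)) (p : Fin (m+1)) :
    fApp θ (p:ℕ) = (θ p : ℕ) := by
  have hp : (⟨min (p:ℕ) m, Nat.lt_succ_of_le (Nat.min_le_right _ _)⟩ : Fin (m+1)) = p :=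
    Fin.ext (show min (p:ℕ) m = (p:ℕ) from by have := p.isLt; omega)
  unfold fApp
  rw [hp]

/-- `Spl_{≤ p}(θ) : [p] → [pθ]`. -/
def splLe {m n : ℕ} (θ : Fin (m+1) →o Fin (n+1)) (p : Fin (m+1)) :
    Fin ((p:ℕ)+1) →o Fin ((θ p : ℕ)+1) where
  toFun i := ⟨fApp θ (i:ℕ), by
    have h1 : fApp θ (i:ℕ) ≤ fApp θ (p:ℕ) := fApp_mono θ (by have := i.isLt; omega)
    have h2 : fApp θ (p:ℕ) = (θ p : ℕ) := fApp_coe θ p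
    omega⟩
  monotone' := by
    intro a b hab
    have h : (a:ℕ) ≤ (b:ℕ) := hab
    simp only [Fin.mk_le_mk]
    exact fApp_mono θ h

/-- `Spl_{≥ p}(θ) : [m-p] → [n-pθ]`. -/
def splGe {m n : ℕ} (θ : Fin (m+1) →o Fin (n+1)) (p : Fin (m+1)) :
    Fin (m - (p:ℕ) + 1) →o Fin (n - (θ p : ℕ) + 1) where
  toFun i := ⟨fApp θ ((i:ℕ) + (p:ℕ)) - (θ p : ℕ), by
    have h1 : fApp θ ((i:ℕ) + (p:ℕ)) ≤ n := fApp_le θ _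
    omega⟩
  monotone' := by
    intro a b hab
    have h : (a:ℕ) ≤ (b:ℕ) := hab
    simp only [Fin.mk_le_mk]
    have := fApp_mono θ (show (a:ℕ) + (p:ℕ) ≤ (b:ℕ) + (p:ℕ) by omega)
    omega

/-- the restriction `θ|_[i]^[j] : [i] → [j]` of `θ` (clamped). -/
def restrictOH {m n : ℕ} (θ : Fin (m+1) →o Fin (n+1)) (i j : ℕ) : Fin (i+1) →o Fin (j+1) where
  toFun k := ⟨min (fApp θ (k:ℕ)) j, Nat.lt_succ_of_le (Nat.min_le_right _ _)⟩
  monotone' := by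
    intro a b hab
    have h : (a:ℕ) ≤ (b:ℕ) := hab
    simp only [Fin.mk_le_mk]
    have := fApp_mono θ h
    omega

/-- ascending product `f a * f (a+1) * ⋯ * f (b-1)`. -/
def aProd {γ : Type*} [Monoid γ] (f : ℕ → γ) (a : ℕ) : ℕ → γ
  | 0 => 1
  | b+1 => if a ≤ b then aProd f a b * f b else 1

/-- descending product `f (b-1) * f (b-2) * ⋯ * f a`. -/
def dProd {γ : Type*} [Monoid γ] (f : ℕ → γ) (a : ℕ) : ℕ → γ
  | 0 => 1
  | b+1 => if a ≤ b then f b * dProd f a b else 1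

end Paper
namespace Paper

/-- A simplicial group, given by levels, structure maps, functoriality,
and levelwise multiplicativity. -/
structure SGrp where
  obj : ℕ → Type
  grp : ∀ n, Group (obj n)
  map : ∀ {m n : ℕ}, (Fin (m+1) →o Fin (n+1)) → obj n → obj m
  map_id : ∀ {n : ℕ} (x : obj n), map OrderHom.id x = x
  map_comp : ∀ {l m n : ℕ} (α : Fin (l+1) →o Fin (m+1)) (β : Fin (m+1) →o Fin (n+1)) (x : obj n),
    map α (map β x) = map (β.comp α) x
  map_mul : ∀ {m n : ℕ} (θ : Fin (m+1) →o Fin (n+1)) (x y : obj n),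
    map θ (x * y) = map θ x * map θ y

attribute [instance] SGrp.grp

namespace SGrp

/-- face `d_k : G_N → G_{N-1}` -/
def face (G : SGrp) (k : ℕ) {N : ℕ} : G.obj N → G.obj (N-1) := G.map (δOH k (N-1) N)

/-- degeneracy `s_k : G_M → G_{M+1}` -/
def deg (G : SGrp) (k : ℕ) {M : ℕ} : G.obj M → G.obj (M+1) := G.map (σOH k (M+1) M)

/-- transport between levels (junk value `1` when levels differ). -/
def gcast (G : SGrp) {a : ℕ} (b : ℕ) (x : G.obj a) : G.obj b := if h : a = b then h ▸ x else 1

/-- descending composite of faces `d_{i+c} d_{i+c-1} ⋯ d_{i+1}`. -/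
def dcomp (G : SGrp) : (i c : ℕ) → {N : ℕ} → G.obj N → G.obj (N - c)
  | _, 0, _, x => x
  | i, c+1, _, x => G.face (i+1) (G.dcomp (i+1) c x)

/-- ascending composite of degeneracies `s_i s_{i+1} ⋯ s_{i+c-1}`. -/
def scomp (G : SGrp) : (i c : ℕ) → {M : ℕ} → G.obj M → G.obj (M + c)
  | _, 0, _, x => x
  | i, c+1, _, x => G.deg (i+c) (G.scomp i c x)

/-- `x ↦ x d_j ⋯ d_{i+1} s_i ⋯ s_{j-1}`, an endomap of `G_N`. -/
def ds (G : SGrp) (i j : ℕ) {N : ℕ} (x : G.obj N) : G.obj N :=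
  G.gcast N (G.scomp i (min (j - i) N) (G.dcomp i (min (j - i) N) x))

/-- `x ↦ x d_j ⋯ d_{i+1} s_i ⋯ s_{n-1} : G_j → G_n`. -/
def dsTo (G : SGrp) (i n : ℕ) {j : ℕ} (x : G.obj j) : G.obj n :=
  G.gcast n (G.scomp i (n - i) (G.gcast i (G.dcomp i (j - i) x)))

/-- the `y_i` of the section `S_G`, defined by descending recursion (with fuel). -/
def yAux (G : SGrp) (n : ℕ) (g : ∀ j : ℕ, G.obj j) : ℕ → ℕ → G.obj n
  | 0, _ => 1
  | fuel+1, i =>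
      aProd (fun j => G.ds i j (G.yAux n g fuel j)⁻¹) (i+1) n *
      dProd (fun j => G.dsTo i n (g j)) i n

/-- `W̄_n G = ∏_{j = n-1}^{0} G_j`. -/
def WbarN (G : SGrp) (n : ℕ) : Type := ∀ j : Fin n, G.obj (j:ℕ)

/-- extension of a tuple in `W̄_n G` by `1`. -/
def gE (G : SGrp) {n : ℕ} (g : G.WbarN n) : ∀ j : ℕ, G.obj j :=
  fun j => if h : j < n then g ⟨j, h⟩ else 1

/-- the coretraction `(S_G)_n : W̄_n G → Diag_n NG = (G_n)^n`. -/
def SGn (G : SGrp) (n : ℕ) (g : G.WbarN n) : Fin n → G.obj n :=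
  fun i => G.yAux n (G.gE g) n (i:ℕ)

/-- extension of a tuple in `(G_n)^n` by `1`. -/
def xE (G : SGrp) {n : ℕ} (x : Fin n → G.obj n) : ℕ → G.obj n :=
  fun j => if h : j < n then x ⟨j, h⟩ else 1

/-- the structure map `W̄_θ : W̄_n G → W̄_m G` of the Kan classifying simplicial set. -/
def wbarMap (G : SGrp) {m n : ℕ} (θ : Fin (m+1) →o Fin (n+1)) (g : G.WbarN n) : G.WbarN m :=
  fun i => dProd (fun j => G.map (restrictOH θ (i:ℕ) j) (G.gE g j))
    ((θ i.castSucc : Fin (n+1)) : ℕ) ((θ i.succ : Fin (n+1)) : ℕ)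

/-- the structure map `(Diag NG)_θ : (G_n)^n → (G_m)^m` of the diagonal of the nerve. -/
def diagMap (G : SGrp) {m n : ℕ} (θ : Fin (m+1) →o Fin (n+1)) (x : Fin n → G.obj n) :
    Fin m → G.obj m :=
  fun i => dProd (fun j => G.map θ (G.xE x j))
    ((θ i.castSucc : Fin (n+1)) : ℕ) ((θ i.succ : Fin (n+1)) : ℕ)

/-- the retraction `(D_G)_n : Diag_n NG → W̄_n G`, `(g_i)_i ↦ (g_i d_n ⋯ d_{i+1})_i`. -/
def DGn (G : SGrp) (n : ℕ) (x : Fin n → G.obj n) : G.WbarN n :=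
  fun i => G.gcast (i:ℕ) (G.dcomp (i:ℕ) (n - (i:ℕ)) (x i))

/-- the components `y_i^{(n+1-k)}` of the homotopy `H`, by descending recursion (with fuel). -/
def hAux (G : SGrp) (n k : ℕ) (g : ℕ → G.obj n) : ℕ → ℕ → G.obj n
  | 0, _ => 1
  | fuel+1, i =>
      if k ≤ i + 1 then g i
      else
        aProd (fun j => G.ds i j (G.hAux n k g fuel j)⁻¹) (i+1) (k-1) *
        dProd (fun j => G.ds i (k-1) (g j)) i (k-1)

end SGrp

/-- recover `k` from the simplex `τ^{n+1-k} ∈ Δ^1_n`: the number of vertices sent to `0`. -/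
def kOf {n : ℕ} (t : Fin (n+1) →o Fin 2) : ℕ :=
  (Finset.univ.filter (fun i => t i = 0)).card

namespace SGrp

/-- the homotopy `H_n : Diag_n NG × Δ^1_n → Diag_n NG`. -/
def Hn (G : SGrp) (n : ℕ) (x : Fin n → G.obj n) (t : Fin (n+1) →o Fin 2) : Fin n → G.obj n :=
  fun i => G.hAux n (kOf t) (G.xE x) (n+1) (i:ℕ)

end SGrp

/-- morphisms of simplicial groups. -/
structure SGrpHom (G G' : SGrp) where
  app : ∀ n, G.obj n → G'.obj n
  comm : ∀ {m n : ℕ} (θ : Fin (m+1) →o Fin (n+1)) (x : G.obj n),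
    app m (G.map θ x) = G'.map θ (app n x)
  mul : ∀ (n : ℕ) (x y : G.obj n), app n (x * y) = app n x * app n y

end Paper
namespace Paper

/-! ### auxiliary scalar functions -/

/-- scalar action of `d_{i+1} ⋯ d_{i+c}` on vertices. -/
def dFun (i c N x : ℕ) : ℕ := min (if x ≤ i then x else x + c) N

/-- scalar action of `s_i ⋯ s_{i+c-1}` on vertices. -/
def sFun (i c M x : ℕ) : ℕ := min (if x ≤ i then x else max i (x - c)) M

lemma dFun_mono (i c N : ℕ) {a b : ℕ} (h : a ≤ b) : dFun i c N a ≤ dFun i c N b := by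
  simp only [dFun]; split_ifs <;> omega

lemma dFun_le (i c N x : ℕ) : dFun i c N x ≤ N := by
  simp only [dFun]; omega

lemma sFun_mono (i c M : ℕ) {a b : ℕ} (h : a ≤ b) : sFun i c M a ≤ sFun i c M b := by
  simp only [sFun]; split_ifs <;> omega

lemma sFun_le (i c M x : ℕ) : sFun i c M x ≤ M := by
  simp only [sFun]; omega

/-- build an order hom from a monotone bounded scalar function. -/
def mkOH (f : ℕ → ℕ) (m n : ℕ) (hmono : ∀ {a b : ℕ}, a ≤ b → f a ≤ f b)
    (hle : ∀ x, f x ≤ n) : Fin (m+1) →o Fin (n+1) where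
  toFun x := ⟨f (x : ℕ), Nat.lt_succ_of_le (hle _)⟩
  monotone' := by
    intro a b hab
    exact Fin.mk_le_mk.mpr (hmono (Fin.le_def.mp hab))

/-- order-hom version of `d_{i+1} ⋯ d_{i+c} : [N-c] → [N]`. -/
def dOH (i c N : ℕ) : Fin (N - c + 1) →o Fin (N+1) :=
  mkOH (dFun i c N) (N - c) N (dFun_mono i c N) (dFun_le i c N)

/-- order-hom version of `s_i ⋯ s_{i+c-1} : [M+c] → [M]`. -/
def sOH (i c M : ℕ) : Fin (M + c + 1) →o Fin (M+1) :=
  mkOH (sFun i c M) (M + c) M (sFun_mono i c M) (sFun_le i c M)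

lemma fApp_mkOH (f : ℕ → ℕ) (m n : ℕ) (hmono : ∀ {a b : ℕ}, a ≤ b → f a ≤ f b)
    (hle : ∀ x, f x ≤ n) (x : ℕ) : fApp (mkOH f m n hmono hle) x = f (min x m) := rfl

lemma fApp_dOH (i c N x : ℕ) : fApp (dOH i c N) x = dFun i c N (min x (N - c)) := rfl

lemma fApp_sOH (i c M x : ℕ) : fApp (sOH i c M) x = sFun i c M (min x (M + c)) := rfl

lemma fApp_δOH (k a b x : ℕ) :
    fApp (δOH k a b) x = min (if min x a < k then min x a else min x a + 1) b := rfl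

lemma fApp_σOH (k a b x : ℕ) :
    fApp (σOH k a b) x = min (if min x a ≤ k then min x a else min x a - 1) b := rfl

lemma fApp_id {n : ℕ} (x : ℕ) :
    fApp (OrderHom.id : Fin (n+1) →o Fin (n+1)) x = min x n := rfl

lemma fApp_comp {l m n : ℕ} (α : Fin (l+1) →o Fin (m+1)) (β : Fin (m+1) →o Fin (n+1))
    (x : ℕ) : fApp (β.comp α) x = fApp β (fApp α x) := by
  unfold fApp
  have h : (⟨min ((α ⟨min x l, Nat.lt_succ_of_le (Nat.min_le_right _ _)⟩ : Fin (m+1)) : ℕ) m,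
      Nat.lt_succ_of_le (Nat.min_le_right _ _)⟩ : Fin (m+1)) =
      α ⟨min x l, Nat.lt_succ_of_le (Nat.min_le_right _ _)⟩ :=
    Fin.ext (Nat.min_eq_left (Nat.lt_succ_iff.mp (Fin.isLt _)))
  rw [h]
  rfl

lemma oh_ext {m n : ℕ} {φ ψ : Fin (m+1) →o Fin (n+1)}
    (h : ∀ t, t ≤ m → fApp φ t = fApp ψ t) : φ = ψ := by
  apply OrderHom.ext; funext p
  apply Fin.ext
  rw [← fApp_coe φ p, ← fApp_coe ψ p]
  exact h p (Nat.lt_succ_iff.mp p.isLt)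

namespace SGrp

variable (G : SGrp)

lemma gcast_rfl {a : ℕ} (x : G.obj a) : G.gcast a x = x := by
  simp [gcast]

lemma gcast_mul {a b : ℕ} (x y : G.obj a) :
    G.gcast b (x * y) = G.gcast b x * G.gcast b y := by
  by_cases h : a = b
  · subst h; rw [gcast_rfl, gcast_rfl, gcast_rfl]
  · simp [gcast, h]

/-- `G.map θ` as a monoid hom. -/
def mapHom {m n : ℕ} (θ : Fin (m+1) →o Fin (n+1)) : G.obj n →* G.obj m :=
  MonoidHom.mk' (G.map θ) (fun x y => G.map_mul θ x y)

/-- `G.gcast b` as a monoid hom. -/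
def gcastHom (a b : ℕ) : G.obj a →* G.obj b :=
  MonoidHom.mk' (G.gcast b) (fun x y => G.gcast_mul x y)

lemma dcomp_eq : ∀ (c i N : ℕ) (x : G.obj N), G.dcomp i c x = G.map (dOH i c N) x := by
  intro c
  induction c with
  | zero =>
    intro i N x
    have h : dOH i 0 N = OrderHom.id := by
      apply oh_ext
      intro t ht
      rw [fApp_dOH, fApp_id]
      simp only [dFun]
      split_ifs <;> omega
    rw [show G.dcomp i 0 x = x from rfl, h, G.map_id]
  | succ c ih =>
    intro i N x
    show G.face (i+1) (G.dcomp (i+1) c x) = _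
    rw [ih, SGrp.face, G.map_comp]
    congr 1
    apply oh_ext
    intro t ht
    rw [fApp_comp]
    simp only [fApp_dOH, fApp_δOH, dFun]
    split_ifs <;> omega

lemma scomp_eq : ∀ (c i M : ℕ) (x : G.obj M), G.scomp i c x = G.map (sOH i c M) x := by
  intro c
  induction c with
  | zero =>
    intro i M x
    have h : sOH i 0 M = OrderHom.id := by
      apply oh_ext
      intro t ht
      rw [fApp_sOH, fApp_id]
      simp only [sFun]
      split_ifs <;> omega
    rw [show G.scomp i 0 x = x from rfl, h, G.map_id]
  | succ c ih =>
    intro i M x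
    show G.deg (i+c) (G.scomp i c x) = _
    rw [ih, SGrp.deg, G.map_comp]
    congr 1
    apply oh_ext
    intro t ht
    rw [fApp_comp]
    simp only [fApp_sOH, fApp_σOH, sFun]
    split_ifs <;> omega

/-- collapsing a `map ∘ gcast ∘ map` composite. -/
lemma mgm {a b p n : ℕ} (h : a = b) (θ : Fin (p+1) →o Fin (b+1))
    (φ : Fin (a+1) →o Fin (n+1)) (ψ : Fin (p+1) →o Fin (n+1))
    (hψ : ∀ t, t ≤ p → fApp ψ t = fApp φ (fApp θ t)) (x : G.obj n) :
    G.map θ (G.gcast b (G.map φ x)) = G.map ψ x := by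
  subst h
  rw [G.gcast_rfl, G.map_comp]
  congr 1
  apply oh_ext
  intro t ht
  rw [fApp_comp]
  exact (hψ t ht).symm

lemma gcast_map_congr {p q n c : ℕ} (h : p = q) (ψ : Fin (p+1) →o Fin (n+1))
    (ψ' : Fin (q+1) →o Fin (n+1)) (hh : ∀ t, t ≤ p → fApp ψ t = fApp ψ' t)
    (x : G.obj n) : G.gcast c (G.map ψ x) = G.gcast c (G.map ψ' x) := by
  subst h
  rw [oh_ext hh]

end SGrp

/-! ### product lemmas -/

section Prod

variable {γ γ' : Type*} [Group γ] [Group γ']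

lemma map_aProd (F : γ →* γ') (f : ℕ → γ) (a : ℕ) :
    ∀ b, F (aProd f a b) = aProd (fun j => F (f j)) a b := by
  intro b
  induction b with
  | zero => simp [aProd]
  | succ b ih =>
    simp only [aProd]
    split_ifs
    · rw [map_mul, ih]
    · exact map_one F

lemma map_dProd (F : γ →* γ') (f : ℕ → γ) (a : ℕ) :
    ∀ b, F (dProd f a b) = dProd (fun j => F (f j)) a b := by
  intro b
  induction b with
  | zero => simp [dProd]
  | succ b ih =>
    simp only [dProd]
    split_ifs
    · rw [map_mul, ih]
    · exact map_one F

lemma aProd_congr {f f' : ℕ → γ} {a : ℕ} :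
    ∀ {b}, (∀ j, a ≤ j → j < b → f j = f' j) → aProd f a b = aProd f' a b := by
  intro b
  induction b with
  | zero => intro _; rfl
  | succ b ih =>
    intro h
    simp only [aProd]
    split_ifs with hab
    · rw [ih (fun j h1 h2 => h j h1 (by omega)), h b hab (by omega)]
    · rfl

lemma dProd_congr {f f' : ℕ → γ} {a : ℕ} :
    ∀ {b}, (∀ j, a ≤ j → j < b → f j = f' j) → dProd f a b = dProd f' a b := by
  intro b
  induction b with
  | zero => intro _; rfl
  | succ b ih =>
    intro h
    simp only [dProd]
    split_ifs with hab
    · rw [ih (fun j h1 h2 => h j h1 (by omega)), h b hab (by omega)]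
    · rfl

lemma dProd_self (f : ℕ → γ) (a : ℕ) : dProd f a a = 1 := by
  cases a with
  | zero => rfl
  | succ a => simp [dProd]

lemma tele (c : ℕ → γ) (i : ℕ) :
    ∀ n, i < n → aProd (fun j => (c j)⁻¹) (i+1) n * dProd c i n = c i := by
  intro n
  induction n with
  | zero => omega
  | succ n ih =>
    intro h
    by_cases hn : i < n
    · simp only [aProd, dProd]
      rw [if_pos (by omega : i + 1 ≤ n), if_pos (by omega : i ≤ n)]
      rw [mul_assoc, inv_mul_cancel_left, ih hn]
    · have : n = i := by omega
      subst this
      simp only [aProd, dProd]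
      rw [if_neg (by omega), if_pos (le_refl n), one_mul, dProd_self, mul_one]

end Prod

namespace SGrp

variable (G : SGrp)

/-- `d_n ⋯ d_{i+1}` kills the `ds`-corrections. -/
lemma fac1' {n i m : ℕ} (him : i + m ≤ n) (x : G.obj n) :
    G.gcast i (G.map (dOH i (n-i) n) (G.gcast n (G.scomp i m (G.dcomp i m x)))) =
      G.gcast i (G.map (dOH i (n-i) n) x) := by
  rw [G.dcomp_eq, G.scomp_eq, G.map_comp]
  rw [G.mgm (show n - m + m = n by omega) (dOH i (n-i) n)
    ((dOH i m n).comp (sOH i m (n-m))) (dOH i (n-i) n) ?_ x]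
  intro t ht
  rw [fApp_comp]
  simp only [fApp_dOH, fApp_sOH, dFun, sFun]
  split_ifs <;> omega

lemma fac1 {n i j : ℕ} (hij : i ≤ j) (hjn : j ≤ n) (x : G.obj n) :
    G.gcast i (G.map (dOH i (n-i) n) (G.ds i j x)) =
      G.gcast i (G.map (dOH i (n-i) n) x) := by
  show G.gcast i (G.map (dOH i (n-i) n)
    (G.gcast n (G.scomp i (min (j-i) n) (G.dcomp i (min (j-i) n) x)))) = _
  exact G.fac1' (by omega) x

/-- `d_n ⋯ d_{i+1}` on a `dsTo`-term gives `d_j ⋯ d_{i+1}`. -/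
lemma fac2 {n i j : ℕ} (hij : i ≤ j) (hjn : j ≤ n) (x : G.obj j) :
    G.gcast i (G.map (dOH i (n-i) n) (G.dsTo i n x)) =
      G.gcast i (G.map (dOH i (j-i) j) x) := by
  show G.gcast i (G.map (dOH i (n-i) n)
    (G.gcast n (G.scomp i (n-i) (G.gcast i (G.dcomp i (j-i) x))))) = _
  rw [G.dcomp_eq, G.scomp_eq]
  have h1 : G.map (sOH i (n-i) i) (G.gcast i (G.map (dOH i (j-i) j) x)) =
      G.map (mkOH (fun t => dFun i (j-i) j (sFun i (n-i) i t)) (i + (n-i)) j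
        (fun h => dFun_mono _ _ _ (sFun_mono _ _ _ h)) (fun _ => dFun_le _ _ _ _)) x := by
    apply G.mgm (show j - (j-i) = i by omega)
    intro t ht
    rw [fApp_mkOH, fApp_dOH, fApp_sOH]
    simp only [dFun, sFun]
    split_ifs <;> omega
  rw [h1]
  have h2 : G.map (dOH i (n-i) n)
      (G.gcast n (G.map (mkOH (fun t => dFun i (j-i) j (sFun i (n-i) i t)) (i + (n-i)) j
        (fun h => dFun_mono _ _ _ (sFun_mono _ _ _ h)) (fun _ => dFun_le _ _ _ _)) x)) =
      G.map (mkOH (fun t => dFun i (j-i) j (sFun i (n-i) i (dFun i (n-i) n t))) (n - (n-i)) j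
        (fun h => dFun_mono _ _ _ (sFun_mono _ _ _ (dFun_mono _ _ _ h)))
        (fun _ => dFun_le _ _ _ _)) x := by
    apply G.mgm (show i + (n-i) = n by omega)
    intro t ht
    rw [fApp_mkOH, fApp_mkOH, fApp_dOH]
    simp only [dFun, sFun]
    split_ifs <;> omega
  rw [h2]
  apply G.gcast_map_congr (show n - (n-i) = j - (j-i) by omega)
  intro t ht
  rw [fApp_mkOH, fApp_dOH]
  simp only [dFun, sFun]
  split_ifs <;> omega

end SGrp

end Paper

namespace Paper
namespace SGrp

lemma key (G : SGrp) (n : ℕ) (g : ∀ j : ℕ, G.obj j) :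
    ∀ fuel i, i < n → n - i ≤ fuel →
      G.gcast i (G.dcomp i (n - i) (G.yAux n g fuel i)) = g i := by
  intro fuel
  induction fuel with
  | zero => intro i h1 h2; omega
  | succ fuel ih =>
    intro i hin hfuel
    rw [G.dcomp_eq]
    set Dh : G.obj n →* G.obj i :=
      (G.gcastHom (n - (n-i)) i).comp (G.mapHom (dOH i (n-i) n)) with hDhdef
    have hD : ∀ x : G.obj n, G.gcast i (G.map (dOH i (n-i) n) x) = Dh x := fun _ => rfl
    have key2 : ∀ j, i < j → j < n →
        Dh (G.yAux n g fuel j) = G.gcast i (G.map (dOH i (j-i) j) (g j)) := by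
      intro j h1 h2
      have hYj : g j = G.gcast j (G.map (dOH j (n-j) n) (G.yAux n g fuel j)) := by
        rw [← G.dcomp_eq]; exact (ih j h2 (by omega)).symm
      rw [← hD, hYj]
      have h3 : G.map (dOH i (j-i) j)
          (G.gcast j (G.map (dOH j (n-j) n) (G.yAux n g fuel j))) =
          G.map (mkOH (fun t => dFun j (n-j) n (dFun i (j-i) j t)) (j - (j-i)) n
            (fun h => dFun_mono _ _ _ (dFun_mono _ _ _ h)) (fun _ => dFun_le _ _ _ _))
            (G.yAux n g fuel j) := by
        apply G.mgm (show n - (n-j) = j by omega)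
        intro t ht
        rw [fApp_mkOH, fApp_dOH, fApp_dOH]
        simp only [dFun]; split_ifs <;> omega
      rw [h3]
      apply G.gcast_map_congr (show n - (n-i) = j - (j-i) by omega)
      intro t ht
      rw [fApp_dOH, fApp_mkOH]
      simp only [dFun]; split_ifs <;> omega
    have hy : G.yAux n g (fuel+1) i =
        aProd (fun j => G.ds i j (G.yAux n g fuel j)⁻¹) (i+1) n *
        dProd (fun j => G.dsTo i n (g j)) i n := rfl
    rw [hD, hy, _root_.map_mul]
    have e1 : Dh (aProd (fun j => G.ds i j (G.yAux n g fuel j)⁻¹) (i+1) n) =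
        aProd (fun j => (G.gcast i (G.map (dOH i (j-i) j) (g j)))⁻¹) (i+1) n := by
      rw [map_aProd]
      apply aProd_congr
      intro j h1 h2
      rw [← hD, G.fac1 (by omega) (by omega), hD, map_inv, key2 j (by omega) h2]
    have e2 : Dh (dProd (fun j => G.dsTo i n (g j)) i n) =
        dProd (fun j => G.gcast i (G.map (dOH i (j-i) j) (g j))) i n := by
      rw [map_dProd]
      apply dProd_congr
      intro j h1 h2
      rw [← hD]
      exact G.fac2 h1 (by omega) (g j)
    rw [e1, e2, tele (fun j => G.gcast i (G.map (dOH i (j-i) j) (g j))) i n hin]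
    have hid : G.gcast i (G.map (dOH i (i-i) i) (g i)) =
        G.gcast i (G.map (OrderHom.id : Fin (i+1) →o Fin (i+1)) (g i)) := by
      apply G.gcast_map_congr (show i - (i-i) = i by omega)
      intro t ht
      rw [fApp_dOH, fApp_id]
      simp only [dFun]; split_ifs <;> omega
    rw [hid, G.map_id, G.gcast_rfl]

end SGrp
end Paper

open Paper Paper.SGrp in
/-- the key inductive computation `y_i d_n d_{n-1} ⋯ d_{i+1} = g_i`
for `(y_j)_j = (g_j)_j (S_G)_n`. -/
theorem stmt_11 (G : SGrp) (n : ℕ) (g : G.WbarN n) (i : Fin n) :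
    G.gcast (i:ℕ) (G.dcomp (i:ℕ) (n - (i:ℕ)) (G.SGn n g i)) = g i := by
  have h := SGrp.key G n (G.gE g) n (i:ℕ) i.isLt (by omega)
  rw [show G.SGn n g i = G.yAux n (G.gE g) n (i:ℕ) from rfl, h]
  simp [SGrp.gE, i.isLt]
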